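/- Let d ≥ 2 and α satisfy (d−1)/2 < α < d/2. Then for every u ∈ ℝ^d, the integral ∫_{ℝ^d} dq / (|u + q| · ⟨q⟩^{2α}) is finite. -/

import Mathlib

open MeasureTheory Real Set Metric ENNReal

/-- Integrability of `‖x‖⁻¹` on the unit ball in `ℝ^d`, `d ≥ 2`. -/
lemma aux_sing (d : ℕ) (hd : 2 ≤ d) :
    MeasureTheory.IntegrableOn (fun x : EuclideanSpace ℝ (Fin d) => ‖x‖⁻¹)
      (Metric.ball 0 1) := by
  have hmeas : Measurable fun x : EuclideanSpace ℝ (Fin d) => ‖x‖⁻¹ :=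
    measurable_norm.inv
  have hnn : ∀ x : EuclideanSpace ℝ (Fin d), 0 ≤ ‖x‖⁻¹ := fun x =>
    inv_nonneg.2 (norm_nonneg x)
  refine ⟨hmeas.aestronglyMeasurable, ?_⟩
  rw [HasFiniteIntegral, lintegral_enorm_of_nonneg hnn,
    lintegral_eq_lintegral_meas_le _ (ae_of_all _ hnn) hmeas.aemeasurable]
  have hvol : volume (Metric.ball (0 : EuclideanSpace ℝ (Fin d)) 1) < ∞ :=
    measure_ball_lt_top
  calc
    ∫⁻ t in Ioi (0:ℝ),
        (volume.restrict (Metric.ball (0 : EuclideanSpace ℝ (Fin d)) 1))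
          {a | t ≤ ‖a‖⁻¹}
      ≤ ∫⁻ t in Ioc (0:ℝ) 1 ∪ Ioi 1,
        (volume.restrict (Metric.ball (0 : EuclideanSpace ℝ (Fin d)) 1))
          {a | t ≤ ‖a‖⁻¹} := lintegral_mono_set Ioi_subset_Ioc_union_Ioi
    _ ≤ (∫⁻ t in Ioc (0:ℝ) 1,
          (volume.restrict (Metric.ball (0 : EuclideanSpace ℝ (Fin d)) 1))
            {a | t ≤ ‖a‖⁻¹})
        + ∫⁻ t in Ioi (1:ℝ),
          (volume.restrict (Metric.ball (0 : EuclideanSpace ℝ (Fin d)) 1))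
            {a | t ≤ ‖a‖⁻¹} := lintegral_union_le _ _ _
    _ < ∞ := by
      refine ENNReal.add_lt_top.2 ⟨?_, ?_⟩
      · calc
          ∫⁻ t in Ioc (0:ℝ) 1,
              (volume.restrict (Metric.ball (0 : EuclideanSpace ℝ (Fin d)) 1))
                {a | t ≤ ‖a‖⁻¹}
            ≤ ∫⁻ _ in Ioc (0:ℝ) 1,
              volume (Metric.ball (0 : EuclideanSpace ℝ (Fin d)) 1) := by
              refine lintegral_mono fun t => ?_
              exact le_trans (measure_mono (subset_univ _))
                (Measure.restrict_apply_univ _).le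
          _ = volume (Metric.ball (0 : EuclideanSpace ℝ (Fin d)) 1)
                * volume (Ioc (0:ℝ) 1) := setLIntegral_const _ _
          _ < ∞ := by
              refine ENNReal.mul_lt_top hvol ?_
              simp [Real.volume_Ioc]
      · have hb : ∀ t ∈ Ioi (1:ℝ),
            (volume.restrict (Metric.ball (0 : EuclideanSpace ℝ (Fin d)) 1))
              {a | t ≤ ‖a‖⁻¹}
            ≤ ENNReal.ofReal (t⁻¹ ^ d)
              * volume (Metric.ball (0 : EuclideanSpace ℝ (Fin d)) 1) := by
          intro t ht
          have ht0 : (0:ℝ) < t := lt_trans one_pos ht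
          have hsub : {a : EuclideanSpace ℝ (Fin d) | t ≤ ‖a‖⁻¹}
              ⊆ Metric.closedBall 0 t⁻¹ := by
            intro a ha
            simp only [mem_setOf_eq] at ha
            rw [mem_closedBall_zero_iff]
            have := inv_anti₀ ht0 ha
            rwa [inv_inv] at this
          calc
            (volume.restrict (Metric.ball (0 : EuclideanSpace ℝ (Fin d)) 1))
                {a | t ≤ ‖a‖⁻¹}
              ≤ volume {a : EuclideanSpace ℝ (Fin d) | t ≤ ‖a‖⁻¹} :=
                Measure.restrict_le_self _
            _ ≤ volume (Metric.closedBall (0 : EuclideanSpace ℝ (Fin d)) t⁻¹) :=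
                measure_mono hsub
            _ = ENNReal.ofReal (t⁻¹ ^ Module.finrank ℝ (EuclideanSpace ℝ (Fin d)))
                  * volume (Metric.ball (0 : EuclideanSpace ℝ (Fin d)) 1) :=
                Measure.addHaar_closedBall _ _ (by positivity)
            _ = _ := by rw [finrank_euclideanSpace_fin]
        calc
          ∫⁻ t in Ioi (1:ℝ),
              (volume.restrict (Metric.ball (0 : EuclideanSpace ℝ (Fin d)) 1))
                {a | t ≤ ‖a‖⁻¹}
            ≤ ∫⁻ t in Ioi (1:ℝ), ENNReal.ofReal (t⁻¹ ^ d)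
                * volume (Metric.ball (0 : EuclideanSpace ℝ (Fin d)) 1) :=
              setLIntegral_mono_ae (by fun_prop) (ae_of_all _ hb)
          _ = (∫⁻ t in Ioi (1:ℝ), ENNReal.ofReal (t⁻¹ ^ d))
                * volume (Metric.ball (0 : EuclideanSpace ℝ (Fin d)) 1) :=
              lintegral_mul_const' _ _ hvol.ne
          _ < ∞ := by
              refine ENNReal.mul_lt_top ?_ hvol
              have hint := (integrableOn_Ioi_rpow_of_lt
                (show -(d:ℝ) < -1 by
                  have : (2:ℝ) ≤ d := by exact_mod_cast hd
                  linarith) one_pos).2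
              rw [HasFiniteIntegral] at hint
              refine lt_of_le_of_lt (le_of_eq ?_) hint
              refine setLIntegral_congr_fun measurableSet_Ioi
                (fun t ht => ?_)
              have ht0 : (0:ℝ) < t := lt_trans one_pos ht
              have h1 : t ^ (-(d:ℝ)) = t⁻¹ ^ d := by
                rw [Real.rpow_neg ht0.le, Real.rpow_natCast, inv_pow]
              rw [← h1, Real.enorm_eq_ofReal (Real.rpow_nonneg ht0.le _)]

/-- For `d ≥ 2` and `(d−1)/2 < α < d/2`, the integral
`∫_{ℝ^d} dq / (|u+q| ⟨q⟩^{2α})` is finite for every `u ∈ ℝ^d`. -/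
theorem stmt4 (d : ℕ) (hd : 2 ≤ d) (α : ℝ)
    (h1 : ((d : ℝ) - 1) / 2 < α) (h2 : α < (d : ℝ) / 2)
    (u : EuclideanSpace ℝ (Fin d)) :
    MeasureTheory.Integrable (fun q : EuclideanSpace ℝ (Fin d) =>
      1 / (‖u + q‖ * (1 + ‖q‖ ^ 2) ^ α)) := by
  have hd2 : (2:ℝ) ≤ d := by exact_mod_cast hd
  have hα0 : 0 < α := by linarith
  set f : EuclideanSpace ℝ (Fin d) → ℝ :=
    fun q => 1 / (‖u + q‖ * (1 + ‖q‖ ^ 2) ^ α) with hf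
  have hmeasf : Measurable f := by
    rw [hf]; fun_prop
  have hfnn : ∀ q, 0 ≤ f q := fun q => by
    have : (0:ℝ) ≤ ‖u + q‖ * (1 + ‖q‖ ^ 2) ^ α := by positivity
    exact div_nonneg one_pos.le this
  have hBpos : ∀ q : EuclideanSpace ℝ (Fin d), (0:ℝ) < (1 + ‖q‖ ^ 2) ^ α :=
    fun q => Real.rpow_pos_of_pos (by positivity) α
  rw [← integrableOn_univ, ← union_compl_self (Metric.ball (-u) 1)]
  apply MeasureTheory.IntegrableOn.union
  · -- near the singularity
    have hg : MeasureTheory.IntegrableOn (fun q => ‖u + q‖⁻¹)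
        (Metric.ball (-u) 1) := by
      have h0 := (integrable_indicator_iff
        (measurableSet_ball (x := (0 : EuclideanSpace ℝ (Fin d))) (ε := 1))).2
        (aux_sing d hd)
      have h0' := h0.comp_add_left u
      have hmem : ∀ t : EuclideanSpace ℝ (Fin d),
          u + t ∈ Metric.ball (0 : EuclideanSpace ℝ (Fin d)) 1
            ↔ t ∈ Metric.ball (-u) 1 := by
        intro t
        simp [Metric.mem_ball, dist_eq_norm, sub_neg_eq_add, add_comm]
      have heq : (fun t : EuclideanSpace ℝ (Fin d) =>
          (Metric.ball (0 : EuclideanSpace ℝ (Fin d)) 1).indicator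
            (fun x => ‖x‖⁻¹) (u + t))
          = (Metric.ball (-u) 1).indicator (fun t => ‖u + t‖⁻¹) := by
        funext t
        by_cases h : u + t ∈ Metric.ball (0 : EuclideanSpace ℝ (Fin d)) 1
        · rw [Set.indicator_of_mem h, Set.indicator_of_mem ((hmem t).1 h)]
        · rw [Set.indicator_of_notMem h,
            Set.indicator_of_notMem (fun h' => h ((hmem t).2 h'))]
      rw [heq] at h0'
      exact (integrable_indicator_iff measurableSet_ball).1 h0'
    refine MeasureTheory.Integrable.mono' hg
      (hmeasf.aestronglyMeasurable.restrict) (ae_of_all _ fun q => ?_)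
    rw [Real.norm_of_nonneg (hfnn q)]
    have hb1 : 1 ≤ (1 + ‖q‖ ^ 2) ^ α :=
      Real.one_le_rpow (by nlinarith [sq_nonneg ‖q‖]) hα0.le
    calc f q = ‖u + q‖⁻¹ * ((1 + ‖q‖ ^ 2) ^ α)⁻¹ := by
          simp only [hf, one_div, mul_inv]
      _ ≤ ‖u + q‖⁻¹ * 1 := by
          refine mul_le_mul_of_nonneg_left ?_ (inv_nonneg.2 (norm_nonneg _))
          exact inv_le_one_of_one_le₀ hb1
      _ = ‖u + q‖⁻¹ := mul_one _
  · -- away from the singularity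
    set c : ℝ := 2 + 2 * ‖u‖ with hc
    have hcpos : (0:ℝ) < c := by positivity
    have hrd : (Module.finrank ℝ (EuclideanSpace ℝ (Fin d)) : ℝ) < 1 + 2 * α := by
      rw [finrank_euclideanSpace_fin]; linarith
    have hg2 : MeasureTheory.Integrable
        (fun q : EuclideanSpace ℝ (Fin d) =>
          c * (1 + ‖q‖ ^ 2) ^ (-(1 + 2 * α) / 2)) :=
      (integrable_rpow_neg_one_add_norm_sq hrd).const_mul c
    refine MeasureTheory.Integrable.mono' hg2.integrableOn
      (hmeasf.aestronglyMeasurable.restrict) ?_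
    rw [ae_restrict_iff' measurableSet_ball.compl]
    refine ae_of_all _ fun q hq => ?_
    have h1uq : (1:ℝ) ≤ ‖u + q‖ := by
      have : ¬ dist q (-u) < 1 := hq
      have h := not_lt.1 this
      rwa [dist_eq_norm, sub_neg_eq_add, add_comm] at h
    have hAB : 0 < ‖u + q‖ := lt_of_lt_of_le one_pos h1uq
    have htri : ‖q‖ ≤ ‖u + q‖ + ‖u‖ := by
      have h := norm_sub_le (u + q) u
      have he : (u + q) - u = q := by abel
      rwa [he] at h
    have hun : (0:ℝ) ≤ ‖u‖ := norm_nonneg u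
    have key0 : 1 + ‖q‖ ≤ c * ‖u + q‖ := by
      have hmul : ‖u‖ * 1 ≤ ‖u‖ * ‖u + q‖ :=
        mul_le_mul_of_nonneg_left h1uq hun
      rw [hc]; nlinarith
    have hP : (0:ℝ) < 1 + ‖q‖ ^ 2 := by positivity
    have key : (1 + ‖q‖ ^ 2) ^ ((1:ℝ)/2) ≤ c * ‖u + q‖ := by
      have hs : (1 + ‖q‖ ^ 2) ^ ((1:ℝ)/2) = √(1 + ‖q‖ ^ 2) :=
        (Real.sqrt_eq_rpow _).symm
      rw [hs]
      exact le_trans (sqrt_one_add_norm_sq_le q) key0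
    rw [Real.norm_of_nonneg (hfnn q)]
    have hsplit : (1 + ‖q‖ ^ 2) ^ (-(1 + 2 * α) / 2)
        = ((1 + ‖q‖ ^ 2) ^ ((1:ℝ)/2) * (1 + ‖q‖ ^ 2) ^ α)⁻¹ := by
      rw [show -(1 + 2 * α) / 2 = -((1:ℝ)/2 + α) by ring,
        Real.rpow_neg hP.le, Real.rpow_add hP]
    have hSpos : (0:ℝ) < (1 + ‖q‖ ^ 2) ^ ((1:ℝ)/2) :=
      Real.rpow_pos_of_pos hP _
    have hBq := hBpos q
    show 1 / (‖u + q‖ * (1 + ‖q‖ ^ 2) ^ α)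
        ≤ c * (1 + ‖q‖ ^ 2) ^ (-(1 + 2 * α) / 2)
    rw [hsplit, ← div_eq_mul_inv,
      div_le_div_iff₀ (by positivity) (by positivity)]
    nlinarith [mul_le_mul_of_nonneg_right key hBq.le, mul_pos hAB hBq]
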